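/- Let q be a prime power and α₁,...,αₙ be distinct nonzero elements of F_q, and u₁,...,uₙ nonzero elements of F_q. Define v_i = u_i⁻¹ · (∏_{j≠i} (α_j − α_i))⁻¹. Then for any 0 ≤ k ≤ n, the GRS code {(u₁f(α₁),...,uₙf(αₙ)) : f ∈ F_q[x], deg f < k} and the GRS code {(v₁g(α₁),...,vₙg(αₙ)) : g ∈ F_q[x], deg g < n−k} are dual codes: for every such f and g, ∑_{i=1}^n u_i f(α_i) · v_i g(α_i) = 0. -/

import Mathlib

open Polynomial Finset

lemma grs_basis_coeff {F : Type*} [Field F] {n : ℕ} (α : Fin n → F)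
    (hα : Function.Injective α) (i : Fin n) :
    (Lagrange.basis Finset.univ α i).coeff (n - 1) =
      (∏ j ∈ Finset.univ.erase i, (α i - α j))⁻¹ := by
  have hdeg : (Lagrange.basis Finset.univ α i).natDegree = n - 1 := by
    simpa using Lagrange.natDegree_basis (hα.injOn) (mem_univ i)
  rw [← hdeg, coeff_natDegree]
  unfold Lagrange.basis
  rw [leadingCoeff_prod, ← prod_inv_distrib]
  refine prod_congr rfl fun j hj => ?_
  unfold Lagrange.basisDivisor
  rw [leadingCoeff_mul, leadingCoeff_C, (monic_X_sub_C (α j)).leadingCoeff, mul_one]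

lemma grs_key {F : Type*} [Field F] {n : ℕ} (α : Fin n → F)
    (hα : Function.Injective α) (h : Polynomial F) (hd : h.degree < ((n - 1 : ℕ) : WithBot ℕ))
    (hdn : h.degree < (n : WithBot ℕ)) :
    ∑ i, h.eval (α i) * (∏ j ∈ Finset.univ.erase i, (α i - α j))⁻¹ = 0 := by
  have hcard : (#(Finset.univ : Finset (Fin n)) : WithBot ℕ) = (n : WithBot ℕ) := by simp
  have heq := Lagrange.eq_interpolate (s := Finset.univ) (v := α) hα.injOn
    (f := h) (by rwa [hcard])
  have hc : h.coeff (n - 1) = 0 := coeff_eq_zero_of_degree_lt hd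
  calc ∑ i, h.eval (α i) * (∏ j ∈ Finset.univ.erase i, (α i - α j))⁻¹
      = (Lagrange.interpolate Finset.univ α fun i => h.eval (α i)).coeff (n - 1) := by
        rw [Lagrange.interpolate_apply, finset_sum_coeff]
        refine (sum_congr rfl fun i _ => ?_).symm
        rw [coeff_C_mul, grs_basis_coeff α hα]
    _ = 0 := by rw [← heq, hc]

/-- Duality of GRS codes: with `v i = (u i)⁻¹ (∏_{j≠i} (α j - α i))⁻¹`, every codeword
of `GRS(α,u)` of dimension `k` is orthogonal to every codeword of `GRS(α,v)` of
dimension `n - k`. -/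
theorem grs_dual (F : Type*) [Field F] [Fintype F] (n : ℕ)
    (α u v : Fin n → F)
    (hα : Function.Injective α) (hα0 : ∀ i, α i ≠ 0)
    (hu : ∀ i, u i ≠ 0)
    (hv : ∀ i, v i = (u i)⁻¹ * (∏ j ∈ Finset.univ.erase i, (α j - α i))⁻¹)
    (k : ℕ) (hk : k ≤ n)
    (f g : Polynomial F)
    (hf : f.degree < (k : WithBot ℕ))
    (hg : g.degree < ((n - k : ℕ) : WithBot ℕ)) :
    ∑ i, (u i * f.eval (α i)) * (v i * g.eval (α i)) = 0 := by
  by_cases hf0 : f = 0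
  · simp [hf0]
  by_cases hg0 : g = 0
  · simp [hg0]
  -- degree bounds in ℕ
  have hfd : f.natDegree < k := (natDegree_lt_iff_degree_lt hf0).mpr hf
  have hgd : g.natDegree < n - k := (natDegree_lt_iff_degree_lt hg0).mpr hg
  have hk1 : 1 ≤ k := by omega
  have hnk1 : 1 ≤ n - k := by omega
  have hfg0 : f * g ≠ 0 := mul_ne_zero hf0 hg0
  have hfgd : (f * g).natDegree < n - 1 := by
    rw [natDegree_mul hf0 hg0]; omega
  have hd : (f * g).degree < ((n - 1 : ℕ) : WithBot ℕ) :=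
    (natDegree_lt_iff_degree_lt hfg0).mp hfgd
  have hdn : (f * g).degree < (n : WithBot ℕ) :=
    (natDegree_lt_iff_degree_lt hfg0).mp (by omega)
  have key := grs_key α hα (f * g) hd hdn
  -- rewrite each term
  have hterm : ∀ i : Fin n, (u i * f.eval (α i)) * (v i * g.eval (α i)) =
      (-1 : F) ^ (n - 1) * ((f * g).eval (α i) * (∏ j ∈ Finset.univ.erase i, (α i - α j))⁻¹) := by
    intro i
    have hcard : #(Finset.univ.erase i) = n - 1 := by
      rw [card_erase_of_mem (mem_univ i)]; simp
    have hprod : ∏ j ∈ Finset.univ.erase i, (α j - α i) =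
        (-1 : F) ^ (n - 1) * ∏ j ∈ Finset.univ.erase i, (α i - α j) := by
      rw [← hcard, ← prod_const, ← prod_mul_distrib]
      refine prod_congr rfl fun j _ => by ring
    rw [hv i, hprod, mul_inv, eval_mul]
    have hinv : ((-1 : F) ^ (n - 1))⁻¹ = (-1 : F) ^ (n - 1) := by
      rw [← inv_pow, inv_neg, inv_one]
    rw [hinv]
    field_simp
    linear_combination eval (α i) f * eval (α i) g *
      (∏ j ∈ Finset.univ.erase i, (α i - α j))⁻¹ *
      mul_inv_cancel₀ (hu i)
  rw [Finset.sum_congr rfl fun i _ => hterm i, ← Finset.mul_sum, key, mul_zero]
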